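/- (Lemma 1) Fix integers a₂, a₁ with a₂ > 0 and max(a₂,|a₁|) ≥ 2ⁿ, and let ψ(2ⁿ) > 0. For each integer a₀ with |a₀| < 2^{n+2}, let Δ(F) denote the set of x ∈ [0,1] with |a₂x² + a₁x + a₀| < ψ(2ⁿ), restricted to quadratics F with two distinct real roots. Then the Lebesgue measure of the union Δ(a₂,a₁) = ⋃_{|a₀| < 2^{n+2}} Δ(F) is at most 16·ψ(2ⁿ). -/

import Mathlib

open MeasureTheory


/-- clamped square-root function used for counting measure of annuli pieces -/
noncomputable def Kf (m' M t : ℝ) : ℝ := Real.sqrt (max (min t (M^2)) (m'^2))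

lemma sqrt_mono : Monotone Real.sqrt := fun _ _ h => Real.sqrt_le_sqrt h

lemma Kf_mono (m' M : ℝ) : Monotone (Kf m' M) := fun x y h =>
  Real.sqrt_le_sqrt (max_le_max (min_le_min_right _ h) le_rfl)

lemma Kf_ge (m' M t : ℝ) (hm' : 0 ≤ m') : m' ≤ Kf m' M t := by
  have h := Real.sqrt_le_sqrt (le_max_right (min t (M^2)) (m'^2))
  rwa [Real.sqrt_sq hm'] at h

lemma Kf_le (m' M t : ℝ) (h : m'^2 ≤ M^2) (hM : 0 ≤ M) : Kf m' M t ≤ M := by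
  have h2 : Kf m' M t ≤ Real.sqrt (M^2) :=
    Real.sqrt_le_sqrt (max_le (min_le_right _ _) h)
  rwa [Real.sqrt_sq hM] at h2

lemma Kf_low (m' M t : ℝ) (hm' : 0 ≤ m') (h : t ≤ m'^2) : Kf m' M t = m' := by
  unfold Kf
  rw [max_eq_right (le_trans (min_le_left _ _) h), Real.sqrt_sq hm']

lemma Kf_mid (m' M t : ℝ) (hM : 0 ≤ M) (h : m'^2 ≤ t) (h2 : m'^2 ≤ M^2) :
    Kf m' M t = min (Real.sqrt t) M := by
  unfold Kf
  rw [max_eq_left (le_min h h2)]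
  rcases le_total t (M^2) with ht | ht
  · rw [min_eq_left ht, min_eq_left]
    have := Real.sqrt_le_sqrt ht
    rwa [Real.sqrt_sq hM] at this
  · rw [min_eq_right ht, Real.sqrt_sq hM, min_eq_right]
    have := Real.sqrt_le_sqrt ht
    rwa [Real.sqrt_sq hM] at this

lemma min_sub_min_le (x y M' : ℝ) (h : y ≤ x) : min x M' - min y M' ≤ x - y := by
  rcases le_total x M' with h1 | h1 <;> rcases le_total y M' with h2 | h2 <;>
    simp [min_eq_left, min_eq_right, h1, h2] <;> linarith

/-- single special term bound: the K-increment over a window of width `2c`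
around a value `D ≥ 1` is at most `2c`. -/
lemma Kf_diff_special (m' M D c : ℝ) (hm' : 0 ≤ m') (hm'M : m' ≤ M)
    (hD : 1 ≤ D) (hc : 0 < c) :
    Kf m' M (D + c) - Kf m' M (D - c) ≤ 2 * c := by
  have hM0 : 0 ≤ M := le_trans hm' hm'M
  have hsq : m'^2 ≤ M^2 := by nlinarith
  have hvpos : (0:ℝ) ≤ D + c := by linarith
  have hp1 : 1 ≤ Real.sqrt (D + c) := by
    rw [show (1:ℝ) = Real.sqrt 1 by rw [Real.sqrt_one]]
    exact Real.sqrt_le_sqrt (by linarith)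
  rcases le_or_gt (m'^2) (D - c) with hu | hu
  · -- middle regime on both sides
    rw [Kf_mid m' M (D - c) hM0 hu hsq, Kf_mid m' M (D + c) hM0 (by linarith) hsq]
    have hmm : Real.sqrt (D - c) ≤ Real.sqrt (D + c) := Real.sqrt_le_sqrt (by linarith)
    have h1 := min_sub_min_le (Real.sqrt (D + c)) (Real.sqrt (D - c)) M hmm
    have hq0 : 0 ≤ Real.sqrt (D - c) := Real.sqrt_nonneg _
    have hpsq : (Real.sqrt (D + c))^2 = D + c := Real.sq_sqrt hvpos
    have hqsq : (Real.sqrt (D - c))^2 = D - c := Real.sq_sqrt (by nlinarith)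
    nlinarith [mul_nonneg (sub_nonneg.2 hmm) (by linarith : (0:ℝ) ≤ Real.sqrt (D+c) + Real.sqrt (D-c) - 1)]
  · rw [Kf_low m' M (D - c) hm' hu.le]
    rcases le_or_gt (D + c) (m'^2) with hv | hv
    · rw [Kf_low m' M (D + c) hm' hv]; linarith
    · have hKv : Kf m' M (D + c) ≤ Real.sqrt (D + c) :=
        Real.sqrt_le_sqrt (max_le (min_le_left _ _) hv.le)
      rcases le_or_gt c D with hDc | hDc
      · -- m' ≥ √(D−c), and √(D+c) − √(D−c) ≤ 2c
        have hm'2 : Real.sqrt (D - c) ≤ m' := by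
          have := Real.sqrt_le_sqrt hu.le
          rwa [Real.sqrt_sq hm'] at this
        have hmm : Real.sqrt (D - c) ≤ Real.sqrt (D + c) := Real.sqrt_le_sqrt (by linarith)
        have hq0 : 0 ≤ Real.sqrt (D - c) := Real.sqrt_nonneg _
        have hpsq : (Real.sqrt (D + c))^2 = D + c := Real.sq_sqrt hvpos
        have hqsq : (Real.sqrt (D - c))^2 = D - c := Real.sq_sqrt (by linarith)
        nlinarith [mul_nonneg (sub_nonneg.2 hmm) (by linarith : (0:ℝ) ≤ Real.sqrt (D+c) + Real.sqrt (D-c) - 1)]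
      · -- D < c, so c > 1 and √(D+c) ≤ √(2c) ≤ 2c
        have hc1 : 1 < c := lt_of_le_of_lt hD hDc
        have h2c : Real.sqrt (D + c) ≤ 2 * c := by
          have step1 : Real.sqrt (D + c) ≤ Real.sqrt ((2*c)^2) :=
            Real.sqrt_le_sqrt (by nlinarith)
          rwa [Real.sqrt_sq (by linarith)] at step1
        linarith

/-- bound at the first point of the middle regime when values already exceed 4. -/
lemma Kf_diff_mid (m' M u c : ℝ) (hm' : 0 ≤ m') (hm'M : m' ≤ M)
    (hu : m'^2 ≤ u) (hc : 0 < c) (h4 : 4 ≤ u + 2*c) :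
    Kf m' M (u + 2*c) - Kf m' M u ≤ c := by
  have hM0 : 0 ≤ M := le_trans hm' hm'M
  have hsq : m'^2 ≤ M^2 := by nlinarith
  have hu0 : 0 ≤ u := le_trans (by positivity) hu
  rw [Kf_mid m' M u hM0 hu hsq, Kf_mid m' M (u + 2*c) hM0 (by linarith) hsq]
  have hmm : Real.sqrt u ≤ Real.sqrt (u + 2*c) := Real.sqrt_le_sqrt (by linarith)
  have h1 := min_sub_min_le (Real.sqrt (u + 2*c)) (Real.sqrt u) M hmm
  have hpsq : (Real.sqrt (u + 2*c))^2 = u + 2*c := Real.sq_sqrt (by linarith)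
  have hqsq : (Real.sqrt u)^2 = u := Real.sq_sqrt hu0
  have hp2 : 2 ≤ Real.sqrt (u + 2*c) := by
    have := Real.sqrt_le_sqrt h4
    rwa [show Real.sqrt 4 = 2 by rw [show (4:ℝ) = 2^2 by norm_num, Real.sqrt_sq (by norm_num)]] at this
  have hq0 : 0 ≤ Real.sqrt u := Real.sqrt_nonneg _
  nlinarith [mul_nonneg (sub_nonneg.2 hmm) (by linarith : (0:ℝ) ≤ Real.sqrt (u+2*c) + Real.sqrt u - 2)]

/-- telescoping comparison in the middle regime. -/
lemma Kf_tele (m' M u' a c : ℝ) (hm' : 0 ≤ m') (hm'M : m' ≤ M)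
    (hu' : m'^2 ≤ u') (ha : 1 ≤ a) (hc : 0 < c) :
    Kf m' M (u' + 4*a + 2*c) - Kf m' M (u' + 4*a) ≤
      (c/(2*a)) * (Kf m' M (u' + 4*a) - Kf m' M u') := by
  have hM0 : 0 ≤ M := le_trans hm' hm'M
  have hsq : m'^2 ≤ M^2 := by nlinarith
  have hu'0 : 0 ≤ u' := le_trans (by positivity) hu'
  have ha0 : (0:ℝ) < a := by linarith
  rw [Kf_mid m' M u' hM0 hu' hsq, Kf_mid m' M (u' + 4*a) hM0 (by linarith) hsq,
    Kf_mid m' M (u' + 4*a + 2*c) hM0 (by linarith) hsq]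
  set r := Real.sqrt u' with hr
  set q := Real.sqrt (u' + 4*a) with hq
  set p := Real.sqrt (u' + 4*a + 2*c) with hp
  have hr0 : 0 ≤ r := Real.sqrt_nonneg _
  have hrq : r ≤ q := Real.sqrt_le_sqrt (by linarith)
  have hqp : q ≤ p := Real.sqrt_le_sqrt (by linarith)
  have hrsq : r^2 = u' := Real.sq_sqrt hu'0
  have hqsq : q^2 = u' + 4*a := Real.sq_sqrt (by linarith)
  have hpsq : p^2 = u' + 4*a + 2*c := Real.sq_sqrt (by linarith)
  have hq2 : 2 ≤ q := by
    have h4q : (2:ℝ)^2 ≤ q^2 := by nlinarith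
    nlinarith
  rcases le_total M q with hMq | hMq
  · -- upper clamp active
    have h1 : min p M ≤ M := min_le_right _ _
    have h2 : min q M = M := min_eq_right hMq
    have h3 : min r M ≤ M := min_le_right _ _
    have h4 : (0:ℝ) ≤ c/(2*a) := by positivity
    have h5 : min r M ≤ min q M := min_le_min hrq le_rfl
    nlinarith [mul_nonneg h4 (sub_nonneg.2 h5)]
  · have h2 : min q M = q := min_eq_left hMq
    have h3 : min r M = r := min_eq_left (le_trans hrq hMq)
    have h1 : min p M ≤ p := min_le_left _ _
    rw [h2, h3]
    have key : 2*a*(p - q)*(p + q) = c*(q - r)*(q + r) := by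
      have e1 : p^2 - q^2 = 2*c := by rw [hpsq, hqsq]; ring
      have e2 : q^2 - r^2 = 4*a := by rw [hqsq, hrsq]; ring
      nlinarith [e1, e2]
    have hqr0 : 0 ≤ c*(q - r) := mul_nonneg hc.le (by linarith)
    have step : 2*a*(p - q)*(p + q) ≤ c*(q - r)*(p + q) := by
      calc 2*a*(p - q)*(p + q) = c*(q - r)*(q + r) := key
        _ ≤ c*(q - r)*(p + q) := by
            apply mul_le_mul_of_nonneg_left _ hqr0
            linarith
    have hpq0 : 0 < p + q := by linarith
    have step2 : 2*a*(p - q) ≤ c*(q - r) := le_of_mul_le_mul_right (by linarith [step]) hpq0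
    have goal2 : p - q ≤ (c/(2*a)) * (q - r) := by
      rw [div_mul_eq_mul_div, le_div_iff₀ (by linarith : (0:ℝ) < 2*a)]
      linarith [step2]
    linarith

/-- telescoping sum identity over `Ioc`. -/
lemma sum_tele_aux (φ : ℤ → ℝ) (l : ℤ) (k : ℕ) :
    ∑ m ∈ Finset.Ioc l (l + k), (φ m - φ (m-1)) = φ (l + k) - φ l := by
  induction k with
  | zero => simp
  | succ n ih =>
      have hins : Finset.Ioc l (l + (n+1 : ℕ)) = insert (l + (n+1 : ℕ)) (Finset.Ioc l (l + n)) := by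
        ext x; simp only [Finset.mem_Ioc, Finset.mem_insert]; push_cast; omega
      rw [hins, Finset.sum_insert (by simp [Finset.mem_Ioc]), ih]
      have e : (l + ((n:ℤ)+1) - 1 : ℤ) = l + n := by ring
      push_cast
      rw [e]
      ring

lemma sum_tele (φ : ℤ → ℝ) (l h : ℤ) (hlh : l ≤ h) :
    ∑ m ∈ Finset.Ioc l h, (φ m - φ (m-1)) = φ h - φ l := by
  obtain ⟨k, rfl⟩ : ∃ k : ℕ, h = l + k := ⟨(h-l).toNat, by omega⟩
  exact sum_tele_aux φ l k

/-- Core lemma: sum of clamped K-increments along the arithmetic progression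
`d + 4am` over a window of width `2c = 8aψ` is at most `16aψ`. -/
lemma side_sum (a ψ d m' M : ℝ) (l h : ℤ)
    (ha : 1 ≤ a) (hψ : 0 < ψ) (hψ2 : ψ ≤ 1/2)
    (hm' : 0 ≤ m') (hm'M : m' ≤ M) (hMm : M ≤ m' + 2*a)
    (hD : ∀ m : ℤ, m ∈ Finset.Icc l h → 1 ≤ d + 4*a*m) :
    ∑ m ∈ Finset.Icc l h,
      (Kf m' M (d + 4*a*m + 4*a*ψ) - Kf m' M (d + 4*a*m - 4*a*ψ)) ≤ 16*a*ψ := by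
  have ha0 : (0:ℝ) < a := by linarith
  set c : ℝ := 4*a*ψ with hc_def
  have hc : 0 < c := by positivity
  have hc2a : 2*c ≤ 4*a := by
    rw [hc_def]; nlinarith
  rcases le_or_gt l h with hlh | hlh
  swap
  · rw [Finset.Icc_eq_empty (by omega), Finset.sum_empty]; positivity
  -- nontrivial range
  set l₁ : ℤ := ⌈(m'^2 + c - d) / (4*a)⌉ with hl1
  have key : ∀ m : ℤ, l₁ ≤ m ↔ m'^2 + c ≤ d + 4*a*m := by
    intro m
    rw [hl1, Int.ceil_le, div_le_iff₀ (by positivity)]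
    constructor <;> intro hh <;> linarith
  set L : ℤ := max l l₁ with hL
  have hlL : l ≤ L := le_max_left _ _
  have hl1L : l₁ ≤ L := le_max_right _ _
  -- the "below window" vanishing lemma
  have hzero : ∀ m : ℤ, m + 1 < l₁ →
      Kf m' M (d + 4*a*m + c) - Kf m' M (d + 4*a*m - c) = 0 := by
    intro m hm
    have h1 : ¬ (m'^2 + c ≤ d + 4*a*(m+1:ℤ)) := by
      rw [← key]; omega
    push_neg at h1
    push_cast at h1
    have h2 : d + 4*a*m + c ≤ m'^2 := by linarith
    rw [Kf_low m' M _ hm' h2, Kf_low m' M _ hm' (by linarith)]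
    ring
  rcases lt_or_ge h L with hBe | hB
  · -- no middle regime at all: at most one nonzero term, namely at h
    have hl1h : h < l₁ := by omega
    have hins : Finset.Icc l h = insert h (Finset.Icc l (h-1)) := by
      ext x; simp only [Finset.mem_Icc, Finset.mem_insert]; omega
    rw [hins, Finset.sum_insert (by simp)]
    have h0 : ∑ m ∈ Finset.Icc l (h-1),
        (Kf m' M (d + 4*a*m + c) - Kf m' M (d + 4*a*m - c)) = 0 :=
      Finset.sum_eq_zero (fun m hm => by
        simp only [Finset.mem_Icc] at hm
        exact hzero m (by omega))
    rw [h0]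
    have hsp := Kf_diff_special m' M (d + 4*a*h) c hm' hm'M
      (hD h (by simp [Finset.mem_Icc]; omega)) hc
    rw [hc_def] at hsp ⊢
    nlinarith
  · -- split the range at L
    have hsplit : Finset.Icc l h = Finset.Icc l (L-1) ∪ Finset.Ioc (L-1) h := by
      ext x; simp only [Finset.mem_Icc, Finset.mem_Ioc, Finset.mem_union]; omega
    have hdisj : Disjoint (Finset.Icc l (L-1)) (Finset.Ioc (L-1) h) := by
      rw [Finset.disjoint_left]
      intro x hx hx'
      simp only [Finset.mem_Icc] at hx
      simp only [Finset.mem_Ioc] at hx'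
      omega
    have hIoc : Finset.Ioc (L-1) h = insert L (Finset.Ioc L h) := by
      ext x; simp only [Finset.mem_Ioc, Finset.mem_insert]; omega
    rw [hsplit, Finset.sum_union hdisj, hIoc, Finset.sum_insert (by simp)]
    -- telescoping part
    have tele_bound : ∑ m ∈ Finset.Ioc L h,
        (Kf m' M (d + 4*a*m + c) - Kf m' M (d + 4*a*m - c)) ≤ c := by
      set φ : ℤ → ℝ := fun m => Kf m' M (d + 4*a*m - c) with hφ
      have hstep : ∀ m ∈ Finset.Ioc L h,
          Kf m' M (d + 4*a*m + c) - Kf m' M (d + 4*a*m - c)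
            ≤ (c/(2*a)) * (φ m - φ (m-1)) := by
        intro m hm
        simp only [Finset.mem_Ioc] at hm
        have hu' : m'^2 ≤ d + 4*a*((m:ℝ)-1) - c := by
          have hk := (key (m-1)).mp (by omega)
          push_cast at hk
          linarith
        have ht := Kf_tele m' M (d + 4*a*((m:ℝ)-1) - c) a c hm' hm'M hu' ha hc
        have e1 : d + 4*a*((m:ℝ)-1) - c + 4*a + 2*c = d + 4*a*m + c := by ring
        have e2 : d + 4*a*((m:ℝ)-1) - c + 4*a = d + 4*a*m - c := by ring
        rw [e1, e2] at ht
        have e3 : φ m = Kf m' M (d + 4*a*m - c) := rfl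
        have e4 : φ (m-1) = Kf m' M (d + 4*a*((m:ℝ)-1) - c) := by
          rw [hφ]; push_cast; ring_nf
        rw [e3, e4]
        calc Kf m' M (d + 4*a*m + c) - Kf m' M (d + 4*a*m - c)
            ≤ (c/(2*a)) * (Kf m' M (d + 4*a*m - c) - Kf m' M (d + 4*a*((m:ℝ)-1) - c)) := ht
          _ = _ := rfl
      calc ∑ m ∈ Finset.Ioc L h, (Kf m' M (d + 4*a*m + c) - Kf m' M (d + 4*a*m - c))
          ≤ ∑ m ∈ Finset.Ioc L h, (c/(2*a)) * (φ m - φ (m-1)) := Finset.sum_le_sum hstep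
        _ = (c/(2*a)) * ∑ m ∈ Finset.Ioc L h, (φ m - φ (m-1)) := by
            rw [Finset.mul_sum]
        _ = (c/(2*a)) * (φ h - φ L) := by rw [sum_tele φ L h hB]
        _ ≤ (c/(2*a)) * (M - m') := by
            apply mul_le_mul_of_nonneg_left _ (by positivity)
            have h1 : φ h ≤ M := Kf_le m' M _ (by nlinarith) (by linarith)
            have h2 : m' ≤ φ L := Kf_ge m' M _ hm'
            linarith
        _ ≤ (c/(2*a)) * (2*a) := by
            apply mul_le_mul_of_nonneg_left (by linarith) (by positivity)
        _ = c := by field_simp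
    -- bound for the term at L and for the part below L
    rcases eq_or_lt_of_le hlL with hEq | hlt
    · -- l = L : part below L is empty
      rw [← hEq]
      rw [show Finset.Icc l (l-1) = ∅ from Finset.Icc_eq_empty (by omega), Finset.sum_empty]
      have hsp := Kf_diff_special m' M (d + 4*a*l) c hm' hm'M
        (hD l (by simp [Finset.mem_Icc]; omega)) hc
      rw [← hEq] at tele_bound
      rw [hc_def] at hsp tele_bound ⊢
      nlinarith
    · -- l < L, so L = l₁
      have hLl1 : L = l₁ := by omega
      -- part below L : only the top term may be nonzero, bounded by 2c
      have hA_bound : ∑ m ∈ Finset.Icc l (L-1),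
          (Kf m' M (d + 4*a*m + c) - Kf m' M (d + 4*a*m - c)) ≤ 2*c := by
        have hins : Finset.Icc l (L-1) = insert (L-1) (Finset.Icc l (L-2)) := by
          ext x; simp only [Finset.mem_Icc, Finset.mem_insert]; omega
        rw [hins, Finset.sum_insert (by simp only [Finset.mem_Icc]; omega)]
        have h0 : ∑ m ∈ Finset.Icc l (L-2),
            (Kf m' M (d + 4*a*m + c) - Kf m' M (d + 4*a*m - c)) = 0 :=
          Finset.sum_eq_zero (fun m hm => by
            simp only [Finset.mem_Icc] at hm
            exact hzero m (by omega))
        rw [h0]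
        have hsp := Kf_diff_special m' M (d + 4*a*((L:ℝ)-1)) c hm' hm'M
          (by
            have := hD (L-1) (by simp [Finset.mem_Icc]; omega)
            push_cast at this ⊢
            linarith) hc
        push_cast
        linarith
      -- term at L bounded by c
      have hgL : Kf m' M (d + 4*a*L + c) - Kf m' M (d + 4*a*L - c) ≤ c := by
        have hu : m'^2 ≤ d + 4*a*(L:ℝ) - c := by
          have hk := (key L).mp (by omega)
          linarith
        have h1L := hD (L-1) (by simp [Finset.mem_Icc]; omega)
        push_cast at h1L
        have h5 : 4 ≤ (d + 4*a*(L:ℝ) - c) + 2*c := by nlinarith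
        have := Kf_diff_mid m' M (d + 4*a*(L:ℝ) - c) c hm' hm'M hu hc h5
        have e : d + 4*a*(L:ℝ) - c + 2*c = d + 4*a*L + c := by ring
        rw [e] at this
        exact this
      rw [hc_def] at hA_bound hgL tele_bound ⊢
      nlinarith

lemma sqrt_min' (x y : ℝ) : Real.sqrt (min x y) = min (Real.sqrt x) (Real.sqrt y) :=
  sqrt_mono.map_min

lemma sqrt_max' (x y : ℝ) : Real.sqrt (max x y) = max (Real.sqrt x) (Real.sqrt y) :=
  sqrt_mono.map_max

/-- the length (in the `2a`-scaled coordinate) of the intersection of an annulus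
shell with a side window is bounded by the corresponding K-increment. -/
lemma piece_ineq (a c w D : ℝ) (ha : 0 < a) (hc : 0 ≤ c) (hD : 0 ≤ D + c) :
    min (Real.sqrt (D+c)) (w + 2*a) - max (Real.sqrt (max (D-c) 0)) w
      ≤ Kf (max w 0) (max (w+2*a) 0) (D+c) - Kf (max w 0) (max (w+2*a) 0) (D-c) := by
  set m' := max w 0 with hm'
  set M := max (w+2*a) 0 with hM
  have hm'0 : 0 ≤ m' := le_max_right _ _
  have h1 : min (Real.sqrt (D+c)) (w + 2*a) ≤ Kf m' M (D+c) := by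
    rcases le_or_gt (w+2*a) 0 with hw | hw
    · have : min (Real.sqrt (D+c)) (w+2*a) ≤ 0 := (min_le_right _ _).trans hw
      exact this.trans (Real.sqrt_nonneg _)
    · have hMe : M = w+2*a := max_eq_left hw.le
      have e : min (Real.sqrt (D+c)) (w + 2*a) = Real.sqrt (min (D+c) (M^2)) := by
        rw [sqrt_min', Real.sqrt_sq (by linarith), hMe]
      rw [e]
      exact Real.sqrt_le_sqrt (le_max_left _ _)
  have h2 : Kf m' M (D-c) ≤ max (Real.sqrt (max (D-c) 0)) w := by
    have step : Kf m' M (D-c) ≤ Real.sqrt (max (max (D-c) 0) (m'^2)) := by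
      apply Real.sqrt_le_sqrt
      exact max_le_max (le_trans (min_le_left _ _) (le_max_left _ _)) le_rfl
    have e : Real.sqrt (max (max (D-c) 0) (m'^2)) =
        max (Real.sqrt (max (D-c) 0)) m' := by
      rw [sqrt_max', Real.sqrt_sq hm'0]
    rw [e] at step
    apply step.trans
    rcases le_or_gt w 0 with hw | hw
    · rw [hm', max_eq_right hw]
      simp [le_max_left]
    · rw [hm', max_eq_left hw.le]
  linarith

lemma len_bound_right (A B c D : ℝ) (hA : 0 < A) (hc : 0 ≤ c) (hD : 0 ≤ D + c) :
    ((-B/(2*A) + Real.sqrt (D + c)/(2*A)) ⊓ 1 -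
      ((-B/(2*A) + Real.sqrt (max (D - c) 0)/(2*A)) ⊔ 0))
      ≤ (Kf (max B 0) (max (B+2*A) 0) (D+c) - Kf (max B 0) (max (B+2*A) 0) (D-c))/(2*A) := by
  have h2A : (0:ℝ) < 2*A := by linarith
  set sv := Real.sqrt (D + c) with hsv
  set su := Real.sqrt (max (D - c) 0) with hsu
  have hsv0 : 0 ≤ sv := Real.sqrt_nonneg _
  have hsu0 : 0 ≤ su := Real.sqrt_nonneg _
  have PRI := piece_ineq A c B D hA hc hD
  rw [le_div_iff₀ h2A]
  have hq1 : (-B/(2*A) + sv/(2*A)) * (2*A) = sv - B := by field_simp; ring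
  have hq2 : (-B/(2*A) + su/(2*A)) * (2*A) = su - B := by field_simp; ring
  have e1 : ((-B/(2*A) + sv/(2*A)) ⊓ 1) * (2*A) = min sv (B + 2*A) - B := by
    rcases le_total (-B/(2*A) + sv/(2*A)) 1 with hx | hx
    · rw [min_eq_left hx, hq1, min_eq_left]
      have := mul_le_mul_of_nonneg_right hx h2A.le
      rw [hq1, one_mul] at this
      linarith
    · rw [min_eq_right hx, min_eq_right, one_mul]
      · ring
      · have := mul_le_mul_of_nonneg_right hx h2A.le
        rw [hq1, one_mul] at this
        linarith
  have e2 : ((-B/(2*A) + su/(2*A)) ⊔ 0) * (2*A) = max su B - B := by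
    rcases le_total 0 (-B/(2*A) + su/(2*A)) with hx | hx
    · rw [max_eq_left hx, hq2, max_eq_left]
      have := mul_le_mul_of_nonneg_right hx h2A.le
      rw [hq2, zero_mul] at this
      linarith
    · rw [max_eq_right hx, zero_mul, max_eq_right]
      · ring
      · have := mul_le_mul_of_nonneg_right hx h2A.le
        rw [hq2, zero_mul] at this
        linarith
  have expand : ((-B/(2*A) + sv/(2*A)) ⊓ 1 - ((-B/(2*A) + su/(2*A)) ⊔ 0)) * (2*A)
      = ((-B/(2*A) + sv/(2*A)) ⊓ 1) * (2*A) - ((-B/(2*A) + su/(2*A)) ⊔ 0) * (2*A) := by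
    ring
  rw [expand, e1, e2]
  linarith

lemma len_bound_left (A B c D : ℝ) (hA : 0 < A) (hc : 0 ≤ c) (hD : 0 ≤ D + c) :
    ((-B/(2*A) - Real.sqrt (max (D - c) 0)/(2*A)) ⊓ 1 -
      ((-B/(2*A) - Real.sqrt (D + c)/(2*A)) ⊔ 0))
      ≤ (Kf (max (-B-2*A) 0) (max (-B) 0) (D+c) - Kf (max (-B-2*A) 0) (max (-B) 0) (D-c))/(2*A) := by
  have h2A : (0:ℝ) < 2*A := by linarith
  set sv := Real.sqrt (D + c) with hsv
  set su := Real.sqrt (max (D - c) 0) with hsu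
  have hsv0 : 0 ≤ sv := Real.sqrt_nonneg _
  have hsu0 : 0 ≤ su := Real.sqrt_nonneg _
  have PLI := piece_ineq A c (-B-2*A) D hA hc hD
  have epl : -B-2*A + 2*A = -B := by ring
  rw [epl] at PLI
  rw [le_div_iff₀ h2A]
  have hq1 : (-B/(2*A) - su/(2*A)) * (2*A) = -B - su := by field_simp
  have hq2 : (-B/(2*A) - sv/(2*A)) * (2*A) = -B - sv := by field_simp
  have e1 : ((-B/(2*A) - su/(2*A)) ⊓ 1) * (2*A) = -B - max su (-B-2*A) := by
    rcases le_total (-B/(2*A) - su/(2*A)) 1 with hx | hx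
    · rw [min_eq_left hx, hq1, max_eq_left]
      have := mul_le_mul_of_nonneg_right hx h2A.le
      rw [hq1, one_mul] at this
      linarith
    · rw [min_eq_right hx, one_mul, max_eq_right]
      · ring
      · have := mul_le_mul_of_nonneg_right hx h2A.le
        rw [hq1, one_mul] at this
        linarith
  have e2 : ((-B/(2*A) - sv/(2*A)) ⊔ 0) * (2*A) = -B - min sv (-B) := by
    rcases le_total 0 (-B/(2*A) - sv/(2*A)) with hx | hx
    · rw [max_eq_left hx, hq2, min_eq_left]
      have := mul_le_mul_of_nonneg_right hx h2A.le
      rw [hq2, zero_mul] at this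
      linarith
    · rw [max_eq_right hx, zero_mul, min_eq_right]
      · ring
      · have := mul_le_mul_of_nonneg_right hx h2A.le
        rw [hq2, zero_mul] at this
        linarith
  have expand : ((-B/(2*A) - su/(2*A)) ⊓ 1 - ((-B/(2*A) - sv/(2*A)) ⊔ 0)) * (2*A)
      = ((-B/(2*A) - su/(2*A)) ⊓ 1) * (2*A) - ((-B/(2*A) - sv/(2*A)) ⊔ 0) * (2*A) := by
    ring
  rw [expand, e1, e2]
  linarith

/-- Lemma 1: Fix integers `a₂ > 0`, `a₁` with `max(a₂,|a₁|) ≥ 2ⁿ` and let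
`ψ(2ⁿ) > 0`. The union over integers `a₀` with `|a₀| < 2^{n+2}` of the sets
`Δ(F) = {x ∈ [0,1] : |a₂x² + a₁x + a₀| < ψ(2ⁿ)}`, restricted to quadratics with two distinct
real roots (positive discriminant), has Lebesgue measure at most `16·ψ(2ⁿ)`. -/
theorem stmt9 (n : ℕ) (a₂ a₁ : ℤ) (ha₂ : 0 < a₂) (hmax : 2 ^ n ≤ max a₂ |a₁|)
    (ψn : ℝ) (hψ : 0 < ψn) :
    volume {x : ℝ | x ∈ Set.Icc (0 : ℝ) 1 ∧ ∃ a₀ : ℤ, |a₀| < 2 ^ (n + 2) ∧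
        0 < a₁ ^ 2 - 4 * a₂ * a₀ ∧
        |(a₂ : ℝ) * x ^ 2 + (a₁ : ℝ) * x + (a₀ : ℝ)| < ψn} ≤
      ENNReal.ofReal (16 * ψn) := by
  rcases le_or_gt (1/16 : ℝ) ψn with h16 | h16
  · refine le_trans (measure_mono (fun x hx => hx.1)) ?_
    rw [Real.volume_Icc]
    apply ENNReal.ofReal_le_ofReal
    linarith
  have hA1 : (1:ℝ) ≤ (a₂:ℝ) := by exact_mod_cast ha₂
  have hA0 : (0:ℝ) < (a₂:ℝ) := by linarith
  have h2A : (0:ℝ) < 2*(a₂:ℝ) := by linarith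
  set P : ℤ := 2^(n+2) with hP
  set c : ℝ := 4*(a₂:ℝ)*ψn with hc_def
  have hc0 : (0:ℝ) < c := by rw [hc_def]; positivity
  set xs : ℝ := -(a₁:ℝ)/(2*(a₂:ℝ)) with hxs
  set Dr : ℤ → ℝ := fun a₀ => (a₁:ℝ)^2 - 4*(a₂:ℝ)*(a₀:ℝ) with hDr
  set rlo : ℤ → ℝ := fun a₀ => Real.sqrt (max (Dr a₀ - c) 0) / (2*(a₂:ℝ)) with hrlo
  set rhi : ℤ → ℝ := fun a₀ => Real.sqrt (Dr a₀ + c) / (2*(a₂:ℝ)) with hrhi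
  set T : Finset ℤ := (Finset.Icc (-P + 1) (P - 1)).filter
      (fun a₀ => 0 < a₁^2 - 4*a₂*a₀) with hT
  have hDrT : ∀ a₀ ∈ T, (1:ℝ) ≤ Dr a₀ := by
    intro a₀ hm
    rw [hT, Finset.mem_filter] at hm
    have h1 : (1:ℤ) ≤ a₁^2 - 4*a₂*a₀ := hm.2
    have h2 : ((1:ℤ):ℝ) ≤ ((a₁^2 - 4*a₂*a₀ : ℤ):ℝ) := by exact_mod_cast h1
    simp only [hDr]
    push_cast at h2 ⊢
    linarith
  -- covering by interval pieces
  have hcover : {x : ℝ | x ∈ Set.Icc (0 : ℝ) 1 ∧ ∃ a₀ : ℤ, |a₀| < P ∧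
        0 < a₁ ^ 2 - 4 * a₂ * a₀ ∧
        |(a₂ : ℝ) * x ^ 2 + (a₁ : ℝ) * x + (a₀ : ℝ)| < ψn} ⊆
      ⋃ a₀ ∈ T, ((Set.Icc (xs + rlo a₀) (xs + rhi a₀) ∩ Set.Icc 0 1) ∪
                 (Set.Icc (xs - rhi a₀) (xs - rlo a₀) ∩ Set.Icc 0 1)) := by
    intro x hx
    obtain ⟨hx01, a₀, habs, hdisc, hval⟩ := hx
    have ha₀T : a₀ ∈ T := by
      rw [hT, Finset.mem_filter, Finset.mem_Icc]
      rw [abs_lt] at habs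
      exact ⟨⟨by omega, by omega⟩, hdisc⟩
    refine Set.mem_biUnion ha₀T ?_
    have hDr1 : (1:ℝ) ≤ Dr a₀ := hDrT a₀ ha₀T
    have hval' : |(a₂:ℝ)*(x - xs)^2 - Dr a₀/(4*(a₂:ℝ))| < ψn := by
      have e : (a₂:ℝ)*(x - xs)^2 - Dr a₀/(4*(a₂:ℝ))
          = (a₂:ℝ)*x^2 + (a₁:ℝ)*x + (a₀:ℝ) := by
        simp only [hxs, hDr]
        field_simp
        ring
      rw [e]; exact hval
    set t : ℝ := 2*(a₂:ℝ)*|x - xs| with ht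
    have ht0 : 0 ≤ t := by positivity
    have ht2 : t^2 = 4*(a₂:ℝ)^2*(x-xs)^2 := by
      rw [ht, mul_pow, mul_pow, sq_abs]; ring
    have habs2 : |t^2 - Dr a₀| < c := by
      have e : t^2 - Dr a₀ = 4*(a₂:ℝ)*((a₂:ℝ)*(x-xs)^2 - Dr a₀/(4*(a₂:ℝ))) := by
        rw [ht2]; field_simp
      rw [e, hc_def, abs_mul, abs_of_pos (by positivity : (0:ℝ) < 4*(a₂:ℝ))]
      exact (mul_lt_mul_iff_right₀ (by positivity)).2 hval'
    rw [abs_lt] at habs2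
    have hlow : Real.sqrt (max (Dr a₀ - c) 0) ≤ t := by
      rw [show t = Real.sqrt (t^2) from (Real.sqrt_sq ht0).symm]
      apply Real.sqrt_le_sqrt
      apply max_le (by linarith) (by positivity)
    have hhi : t ≤ Real.sqrt (Dr a₀ + c) := by
      rw [show t = Real.sqrt (t^2) from (Real.sqrt_sq ht0).symm]
      apply Real.sqrt_le_sqrt
      linarith
    rcases le_total xs x with hxx | hxx
    · left
      have habs_eq : |x - xs| = x - xs := abs_of_nonneg (by linarith)
      have hteq : t = 2*(a₂:ℝ)*(x - xs) := by rw [ht, habs_eq]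
      refine ⟨⟨?_, ?_⟩, hx01⟩
      · have h1' : Real.sqrt (max (Dr a₀ - c) 0) / (2*(a₂:ℝ)) ≤ x - xs := by
          rw [div_le_iff₀ h2A]
          linarith [hlow]
        simp only [hrlo]
        linarith
      · have h2' : x - xs ≤ Real.sqrt (Dr a₀ + c) / (2*(a₂:ℝ)) := by
          rw [le_div_iff₀ h2A]
          linarith [hhi]
        simp only [hrhi]
        linarith
    · right
      have habs_eq : |x - xs| = xs - x := by rw [abs_of_nonpos (by linarith)]; ring
      have hteq : t = 2*(a₂:ℝ)*(xs - x) := by rw [ht, habs_eq]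
      refine ⟨⟨?_, ?_⟩, hx01⟩
      · have h2' : xs - x ≤ Real.sqrt (Dr a₀ + c) / (2*(a₂:ℝ)) := by
          rw [le_div_iff₀ h2A]
          linarith [hhi]
        simp only [hrhi]
        linarith
      · have h1' : Real.sqrt (max (Dr a₀ - c) 0) / (2*(a₂:ℝ)) ≤ xs - x := by
          rw [div_le_iff₀ h2A]
          linarith [hlow]
        simp only [hrlo]
        linarith
  refine le_trans (measure_mono hcover) ?_
  refine le_trans (measure_biUnion_finset_le _ _) ?_
  -- per-element volume bounds
  set mR : ℝ := max (a₁:ℝ) 0 with hmR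
  set MR : ℝ := max ((a₁:ℝ)+2*(a₂:ℝ)) 0 with hMR
  set mL : ℝ := max (-(a₁:ℝ)-2*(a₂:ℝ)) 0 with hmL
  set ML : ℝ := max (-(a₁:ℝ)) 0 with hML
  set gR : ℤ → ℝ := fun a₀ => Kf mR MR (Dr a₀ + c) - Kf mR MR (Dr a₀ - c) with hgR
  set gL : ℤ → ℝ := fun a₀ => Kf mL ML (Dr a₀ + c) - Kf mL ML (Dr a₀ - c) with hgL
  have hvol : ∀ a₀ ∈ T,
      volume ((Set.Icc (xs + rlo a₀) (xs + rhi a₀) ∩ Set.Icc 0 1) ∪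
              (Set.Icc (xs - rhi a₀) (xs - rlo a₀) ∩ Set.Icc 0 1))
        ≤ ENNReal.ofReal (gR a₀/(2*(a₂:ℝ))) + ENNReal.ofReal (gL a₀/(2*(a₂:ℝ))) := by
    intro a₀ ha₀
    have hDr1 : (1:ℝ) ≤ Dr a₀ := hDrT a₀ ha₀
    refine le_trans (measure_union_le _ _) (add_le_add ?_ ?_)
    · rw [Set.Icc_inter_Icc, Real.volume_Icc]
      apply ENNReal.ofReal_le_ofReal
      have hbd := len_bound_right (a₂:ℝ) (a₁:ℝ) c (Dr a₀) hA0 hc0.le (by linarith)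
      simp only [hxs, hrlo, hrhi, hgR, hmR, hMR] at *
      exact hbd
    · rw [Set.Icc_inter_Icc, Real.volume_Icc]
      apply ENNReal.ofReal_le_ofReal
      have hbd := len_bound_left (a₂:ℝ) (a₁:ℝ) c (Dr a₀) hA0 hc0.le (by linarith)
      simp only [hxs, hrlo, hrhi, hgL, hmL, hML] at *
      exact hbd
  refine le_trans (Finset.sum_le_sum hvol) ?_
  -- reindexing machinery
  set l₀ : ℤ := -((a₁^2 - 1) / (4*a₂)) with hl₀
  have key0 : ∀ m : ℤ, 0 < a₁^2 + 4*a₂*m ↔ l₀ ≤ m := by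
    intro m
    rw [hl₀, neg_le, Int.le_ediv_iff_mul_le (by positivity : (0:ℤ) < 4*a₂)]
    constructor <;> intro hh <;> nlinarith [hh]
  have himg : T.image (fun z => -z) = Finset.Icc (max (-(P-1)) l₀) (P-1) := by
    ext m
    simp only [Finset.mem_image, hT, Finset.mem_filter, Finset.mem_Icc]
    constructor
    · rintro ⟨x, ⟨⟨hx1, hx2⟩, hx3⟩, rfl⟩
      have hpos : 0 < a₁^2 + 4*a₂*(-x) := by nlinarith [hx3]
      have h4 := (key0 (-x)).mp hpos
      exact ⟨max_le (by omega) h4, by omega⟩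
    · rintro ⟨h1, h2⟩
      have hA' := le_trans (le_max_left (-(P-1)) l₀) h1
      have hB' := le_trans (le_max_right (-(P-1)) l₀) h1
      have hpos := (key0 m).mpr hB'
      refine ⟨-m, ⟨⟨by omega, by omega⟩, by nlinarith [hpos]⟩, by ring⟩
  have hswap : ∀ m' M : ℝ, ∑ a₀ ∈ T, (Kf m' M (Dr a₀ + c) - Kf m' M (Dr a₀ - c))
      = ∑ m ∈ Finset.Icc (max (-(P-1)) l₀) (P-1),
        (Kf m' M ((a₁:ℝ)^2 + 4*(a₂:ℝ)*(m:ℝ) + c) - Kf m' M ((a₁:ℝ)^2 + 4*(a₂:ℝ)*(m:ℝ) - c)) := by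
    intro m' M
    rw [← himg, Finset.sum_image (by intro x _ y _ hxy; simp only [neg_inj] at hxy; omega)]
    apply Finset.sum_congr rfl
    intro x hx
    have e1 : (a₁:ℝ)^2 + 4*(a₂:ℝ)*((-x : ℤ):ℝ) + c = Dr x + c := by
      simp only [hDr]; push_cast; ring
    have e2 : (a₁:ℝ)^2 + 4*(a₂:ℝ)*((-x : ℤ):ℝ) - c = Dr x - c := by
      simp only [hDr]; push_cast; ring
    rw [e1, e2]
  have hDside : ∀ m : ℤ, m ∈ Finset.Icc (max (-(P-1)) l₀) (P-1) →
      (1:ℝ) ≤ (a₁:ℝ)^2 + 4*(a₂:ℝ)*(m:ℝ) := by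
    intro m hm
    simp only [Finset.mem_Icc] at hm
    have hl := le_trans (le_max_right (-(P-1)) l₀) hm.1
    have h0 := (key0 m).mpr hl
    have h1 : (1:ℤ) ≤ a₁^2 + 4*a₂*m := h0
    have h2 : ((1:ℤ):ℝ) ≤ ((a₁^2 + 4*a₂*m : ℤ):ℝ) := by exact_mod_cast h1
    push_cast at h2
    linarith
  -- right side sum
  have hsumR : ∑ a₀ ∈ T, gR a₀/(2*(a₂:ℝ)) ≤ 8*ψn := by
    rw [← Finset.sum_div, div_le_iff₀ h2A]
    have hside := side_sum (a₂:ℝ) ψn ((a₁:ℝ)^2) mR MR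
        (max (-(P-1)) l₀) (P-1) hA1 hψ (by linarith) (le_max_right _ _)
        (by rw [hmR, hMR]; exact max_le_max (by linarith) le_rfl)
        (by
          rw [hmR, hMR]
          apply max_le
          · have := le_max_left (a₁:ℝ) 0; linarith
          · have := le_max_right (a₁:ℝ) 0; linarith)
        hDside
    rw [← hc_def] at hside
    have heq : ∑ a₀ ∈ T, gR a₀
        = ∑ m ∈ Finset.Icc (max (-(P-1)) l₀) (P-1),
          (Kf mR MR ((a₁:ℝ)^2 + 4*(a₂:ℝ)*(m:ℝ) + c) - Kf mR MR ((a₁:ℝ)^2 + 4*(a₂:ℝ)*(m:ℝ) - c)) := by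
      simp only [hgR]
      exact hswap mR MR
    rw [heq]
    nlinarith [hside]
  -- left side sum
  have hsumL : ∑ a₀ ∈ T, gL a₀/(2*(a₂:ℝ)) ≤ 8*ψn := by
    rw [← Finset.sum_div, div_le_iff₀ h2A]
    have hside := side_sum (a₂:ℝ) ψn ((a₁:ℝ)^2) mL ML
        (max (-(P-1)) l₀) (P-1) hA1 hψ (by linarith) (le_max_right _ _)
        (by rw [hmL, hML]; exact max_le_max (by linarith) le_rfl)
        (by
          rw [hmL, hML]
          apply max_le
          · have := le_max_left (-(a₁:ℝ)-2*(a₂:ℝ)) 0; linarith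
          · have := le_max_right (-(a₁:ℝ)-2*(a₂:ℝ)) 0; linarith)
        hDside
    rw [← hc_def] at hside
    have heq : ∑ a₀ ∈ T, gL a₀
        = ∑ m ∈ Finset.Icc (max (-(P-1)) l₀) (P-1),
          (Kf mL ML ((a₁:ℝ)^2 + 4*(a₂:ℝ)*(m:ℝ) + c) - Kf mL ML ((a₁:ℝ)^2 + 4*(a₂:ℝ)*(m:ℝ) - c)) := by
      simp only [hgL]
      exact hswap mL ML
    rw [heq]
    nlinarith [hside]
  -- assemble in ENNReal
  have hgRnn : ∀ a₀ ∈ T, 0 ≤ gR a₀/(2*(a₂:ℝ)) := by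
    intro a₀ _
    apply div_nonneg _ h2A.le
    simp only [hgR]
    have := Kf_mono mR MR (show Dr a₀ - c ≤ Dr a₀ + c by linarith)
    linarith
  have hgLnn : ∀ a₀ ∈ T, 0 ≤ gL a₀/(2*(a₂:ℝ)) := by
    intro a₀ _
    apply div_nonneg _ h2A.le
    simp only [hgL]
    have := Kf_mono mL ML (show Dr a₀ - c ≤ Dr a₀ + c by linarith)
    linarith
  calc ∑ a₀ ∈ T, (ENNReal.ofReal (gR a₀/(2*(a₂:ℝ))) + ENNReal.ofReal (gL a₀/(2*(a₂:ℝ))))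
      = (∑ a₀ ∈ T, ENNReal.ofReal (gR a₀/(2*(a₂:ℝ))))
        + ∑ a₀ ∈ T, ENNReal.ofReal (gL a₀/(2*(a₂:ℝ))) := Finset.sum_add_distrib
    _ = ENNReal.ofReal (∑ a₀ ∈ T, gR a₀/(2*(a₂:ℝ)))
        + ENNReal.ofReal (∑ a₀ ∈ T, gL a₀/(2*(a₂:ℝ))) := by
        rw [ENNReal.ofReal_sum_of_nonneg hgRnn, ENNReal.ofReal_sum_of_nonneg hgLnn]
    _ ≤ ENNReal.ofReal (8*ψn) + ENNReal.ofReal (8*ψn) :=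
        add_le_add (ENNReal.ofReal_le_ofReal hsumR) (ENNReal.ofReal_le_ofReal hsumL)
    _ = ENNReal.ofReal (16*ψn) := by
        rw [← ENNReal.ofReal_add (by positivity) (by positivity)]
        congr 1
        ring
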